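/- Let A, B ∈ GL(d, K) satisfy ABA = BAB and suppose (AB)³ = δ·I for a scalar δ. If W ⊆ K^d is a subspace of dimension r invariant under both A and B, then (λ₁···λ_d)^{6r} = (μ₁···μ_r)^{6d}, where λ₁,...,λ_d are the eigenvalues of A on K^d (with multiplicity) and μ₁,...,μ_r are the eigenvalues of A restricted to W. -/

import Mathlib

theorem braid_submodule_det_constraint {K : Type*} [Field K] [IsAlgClosed K] {d : ℕ}
    (A B : Matrix (Fin d) (Fin d) K) (hA : IsUnit A) (hB : IsUnit B)
    (hbraid : A * B * A = B * A * B) (δ : K)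
    (hcentral : (A * B) ^ 3 = δ • (1 : Matrix (Fin d) (Fin d) K))
    (W : Submodule K (Fin d → K)) (r : ℕ) (hr : Module.finrank K ↥W = r)
    (hWA : ∀ x ∈ W, A.mulVecLin x ∈ W) (hWB : ∀ x ∈ W, B.mulVecLin x ∈ W) :
    A.det ^ (6 * r) = (LinearMap.det (A.mulVecLin.restrict hWA)) ^ (6 * d) := by
  have hdA : A.det ≠ 0 := by
    rcases hA.exists_right_inv with ⟨C, hC⟩
    intro h; have := congrArg Matrix.det hC; simp [h] at this
  have hdB : B.det ≠ 0 := by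
    rcases hB.exists_right_inv with ⟨C, hC⟩
    intro h; have := congrArg Matrix.det hC; simp [h] at this
  -- det A = det B
  have hdet_eq : A.det = B.det := by
    have h := congrArg Matrix.det hbraid
    simp only [Matrix.det_mul] at h
    have h' : (A.det * B.det) * A.det = (A.det * B.det) * B.det := by
      rw [h]; ring
    exact mul_left_cancel₀ (mul_ne_zero hdA hdB) h'
  -- det A ^ 6 = δ ^ d
  have hAd6 : A.det ^ 6 = δ ^ d := by
    have h := congrArg Matrix.det hcentral
    simp only [Matrix.det_pow, Matrix.det_mul, Matrix.det_smul, Matrix.det_one,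
      Fintype.card_fin, mul_one] at h
    rw [← hdet_eq] at h
    calc A.det ^ 6 = (A.det * A.det) ^ 3 := by ring
    _ = δ ^ d := h
  -- now the restriction
  set fW := A.mulVecLin.restrict hWA with hfW
  set gW := B.mulVecLin.restrict hWB with hgW
  have hres : ∀ (M : Matrix (Fin d) (Fin d) K) (hM : ∀ x ∈ W, M.mulVecLin x ∈ W)
      (x : W), ((M.mulVecLin.restrict hM) x : Fin d → K) = M.mulVecLin x := by
    intro M hM x; rfl
  have hbraidW : fW * gW * fW = gW * fW * gW := by
    refine LinearMap.ext fun x => Subtype.ext ?_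
    have : (A * B * A).mulVecLin x = (B * A * B).mulVecLin x := by rw [hbraid]
    simpa [Matrix.mulVecLin_mul, Module.End.mul_apply, hres, hfW, hgW, ← Matrix.mulVec_mulVec] using this
  have hcentralW : (fW * gW) ^ 3 = δ • (1 : W →ₗ[K] W) := by
    refine LinearMap.ext fun x => Subtype.ext ?_
    have : ((A * B) ^ 3).mulVecLin x = (δ • (1 : Matrix (Fin d) (Fin d) K)).mulVecLin x := by
      rw [hcentral]
    simp only [pow_succ, pow_zero, one_mul, Matrix.mulVecLin_mul] at this ⊢
    simpa [Module.End.mul_apply, hres, hfW, hgW, ← Matrix.mulVec_mulVec, Matrix.smul_mulVec, Matrix.one_mulVec] using this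
  -- injectivity of restrictions ⇒ nonzero dets
  have hinj : ∀ (M : Matrix (Fin d) (Fin d) K) (hMu : IsUnit M)
      (hM : ∀ x ∈ W, M.mulVecLin x ∈ W),
      LinearMap.det (M.mulVecLin.restrict hM) ≠ 0 := by
    intro M hMu hM hdet
    have hMi : Function.Injective M.mulVecLin := by
      rcases hMu.exists_left_inv with ⟨C, hC⟩
      intro x y hxy
      have := congrArg C.mulVecLin hxy
      simpa [← Matrix.mulVecLin_mul, hC] using this
    have hri : Function.Injective (M.mulVecLin.restrict hM) := by
      intro x y hxy
      exact Subtype.ext (hMi (by simpa [hres] using congrArg (Subtype.val) hxy))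
    have := LinearMap.bot_lt_ker_of_det_eq_zero hdet
    rw [LinearMap.ker_eq_bot.mpr hri] at this
    exact lt_irrefl _ this
  have hdfW : LinearMap.det fW ≠ 0 := hinj A hA hWA
  have hdgW : LinearMap.det gW ≠ 0 := hinj B hB hWB
  have hdeq : LinearMap.det fW = LinearMap.det gW := by
    have h := congrArg LinearMap.det hbraidW
    rw [MonoidHom.map_mul, MonoidHom.map_mul, MonoidHom.map_mul, MonoidHom.map_mul] at h
    have h' : (LinearMap.det fW * LinearMap.det gW) * LinearMap.det fW
        = (LinearMap.det fW * LinearMap.det gW) * LinearMap.det gW := by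
      rw [h]; ring
    exact mul_left_cancel₀ (mul_ne_zero hdfW hdgW) h'
  have hW6 : LinearMap.det fW ^ 6 = δ ^ r := by
    have h := congrArg LinearMap.det hcentralW
    rw [MonoidHom.map_pow, MonoidHom.map_mul, LinearMap.det_smul, MonoidHom.map_one, mul_one, hr, ← hdeq] at h
    calc LinearMap.det fW ^ 6 = (LinearMap.det fW * LinearMap.det fW) ^ 3 := by ring
    _ = δ ^ r := h
  calc A.det ^ (6 * r) = (A.det ^ 6) ^ r := by rw [pow_mul]
  _ = (δ ^ d) ^ r := by rw [hAd6]
  _ = (δ ^ r) ^ d := by rw [← pow_mul, ← pow_mul, Nat.mul_comm]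
  _ = (LinearMap.det fW ^ 6) ^ d := by rw [hW6]
  _ = LinearMap.det fW ^ (6 * d) := by rw [pow_mul]
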